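/- The condition number of the Hessian ∇²E(x) is bounded above by 1 + ‖Ā_k‖²/λ for all x ∈ R^D. -/
import Mathlib


open scoped BigOperators Matrix

noncomputable def specNorm {m n : ℕ} (M : Matrix (Fin m) (Fin n) ℝ) : ℝ :=
  ‖LinearMap.toContinuousLinearMap (Matrix.toEuclideanLin M)‖

/-- The softmax Hessian form `λ I + Āᵀ (diag(p) − p pᵀ) Ā`. -/
noncomputable def hessE {K D : ℕ} (lam : ℝ) (Ab : Matrix (Fin K) (Fin D) ℝ)
    (p : Fin K → ℝ) : Matrix (Fin D) (Fin D) ℝ :=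
  lam • (1 : Matrix (Fin D) (Fin D) ℝ) +
    Abᵀ * (Matrix.diagonal p - Matrix.vecMulVec p p) * Ab

lemma hessE_quadform {K D : ℕ} (lam : ℝ) (Ab : Matrix (Fin K) (Fin D) ℝ) (p : Fin K → ℝ)
    (v : Fin D → ℝ) :
    v ⬝ᵥ (hessE lam Ab p *ᵥ v)
    = lam * (v ⬝ᵥ v) + ((∑ i, p i * (Ab *ᵥ v) i ^ 2) - (∑ i, p i * (Ab *ᵥ v) i) ^ 2) := by
  set y := Ab *ᵥ v with hy
  rw [hessE, Matrix.add_mulVec, dotProduct_add, Matrix.smul_mulVec,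
    Matrix.one_mulVec, dotProduct_smul, ← Matrix.mulVec_mulVec, ← Matrix.mulVec_mulVec,
    Matrix.dotProduct_mulVec v Abᵀ, Matrix.vecMul_transpose, ← hy,
    Matrix.sub_mulVec, dotProduct_sub]
  rw [smul_eq_mul]
  congr 1
  congr 1
  · simp [dotProduct, Matrix.mulVec_diagonal, mul_comm, sq, mul_assoc, mul_left_comm]
  · simp [dotProduct, Matrix.vecMulVec, Matrix.mulVec, Finset.mul_sum, Finset.sum_mul, sq]
    rw [Finset.sum_comm]
    apply Finset.sum_congr rfl; intro i _
    apply Finset.sum_congr rfl; intro j _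
    ring

lemma mulVec_dot_le {K D : ℕ} (Ab : Matrix (Fin K) (Fin D) ℝ) (v : Fin D → ℝ) :
    (Ab *ᵥ v) ⬝ᵥ (Ab *ᵥ v) ≤ specNorm Ab ^ 2 * (v ⬝ᵥ v) := by
  set x : EuclideanSpace ℝ (Fin D) := (WithLp.equiv 2 _).symm v with hx
  have h1 : Matrix.toEuclideanLin Ab x = (WithLp.equiv 2 _).symm (Ab *ᵥ v) := by
    rw [Matrix.toEuclideanLin_apply]; simp [hx]
  have h2 : ‖(LinearMap.toContinuousLinearMap (Matrix.toEuclideanLin Ab)) x‖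
      ≤ specNorm Ab * ‖x‖ := (LinearMap.toContinuousLinearMap (Matrix.toEuclideanLin Ab)).le_opNorm x
  have h3 : ∀ (n : ℕ) (w : Fin n → ℝ),
      ‖((WithLp.equiv 2 (Fin n → ℝ)).symm w : EuclideanSpace ℝ (Fin n))‖ ^ 2 = w ⬝ᵥ w := by
    intro n w
    rw [EuclideanSpace.norm_eq, Real.sq_sqrt (by positivity)]
    simp [dotProduct, sq, Real.norm_eq_abs, abs_mul_abs_self]
  calc (Ab *ᵥ v) ⬝ᵥ (Ab *ᵥ v) = ‖((WithLp.equiv 2 _).symm (Ab *ᵥ v) : EuclideanSpace ℝ (Fin K))‖ ^ 2 := (h3 _ _).symm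
    _ = ‖(LinearMap.toContinuousLinearMap (Matrix.toEuclideanLin Ab)) x‖ ^ 2 := by
        rw [LinearMap.coe_toContinuousLinearMap', h1]
    _ ≤ (specNorm Ab * ‖x‖) ^ 2 := by
        apply pow_le_pow_left₀ (norm_nonneg _) h2
    _ = specNorm Ab ^ 2 * (v ⬝ᵥ v) := by rw [mul_pow, h3 D v]

/-- the condition number of the Hessian (ratio of largest to smallest
eigenvalue, hence any ratio of eigenvalues) is at most `1 + ‖Ā‖²/λ`. -/
theorem hessE_condition_number_le {K D : ℕ} (lam : ℝ) (hlam : 0 < lam)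
    (Ab : Matrix (Fin K) (Fin D) ℝ) (p : Fin K → ℝ)
    (hpos : ∀ i, 0 < p i) (hsum : ∑ i, p i = 1)
    (hH : (hessE lam Ab p).IsHermitian) :
    ∀ i j : Fin D, hH.eigenvalues i / hH.eigenvalues j ≤ 1 + specNorm Ab ^ 2 / lam := by
  -- quadratic form bounds on unit vectors
  have key : ∀ v : Fin D → ℝ, v ⬝ᵥ v = 1 →
      lam ≤ v ⬝ᵥ (hessE lam Ab p *ᵥ v) ∧
      v ⬝ᵥ (hessE lam Ab p *ᵥ v) ≤ lam + specNorm Ab ^ 2 := by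
    intro v hv
    rw [hessE_quadform, hv, mul_one]
    set y := Ab *ᵥ v with hy
    have cs : (∑ i, p i * y i) ^ 2 ≤ ∑ i, p i * y i ^ 2 := by
      have := Finset.sum_mul_sq_le_sq_mul_sq Finset.univ
        (fun i => Real.sqrt (p i)) (fun i => Real.sqrt (p i) * y i)
      have e1 : ∀ i : Fin K, Real.sqrt (p i) * (Real.sqrt (p i) * y i) = p i * y i := by
        intro i; rw [← mul_assoc, Real.mul_self_sqrt (hpos i).le]
      have e2 : ∀ i : Fin K, Real.sqrt (p i) ^ 2 = p i := fun i => Real.sq_sqrt (hpos i).le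
      have e3 : ∀ i : Fin K, (Real.sqrt (p i) * y i) ^ 2 = p i * y i ^ 2 := by
        intro i; rw [mul_pow, e2]
      simp only [e1, e3] at this
      calc (∑ i, p i * y i) ^ 2 ≤ (∑ i, Real.sqrt (p i) ^ 2) * ∑ i, p i * y i ^ 2 := this
        _ = ∑ i, p i * y i ^ 2 := by simp only [e2, hsum, one_mul]
    constructor
    · nlinarith [cs]
    · have h1 : ∑ i, p i * y i ^ 2 ≤ y ⬝ᵥ y := by
        have : ∀ i : Fin K, p i ≤ 1 := by
          intro i
          rw [← hsum]
          exact Finset.single_le_sum (fun j _ => (hpos j).le) (Finset.mem_univ i)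
        simp only [dotProduct]
        apply Finset.sum_le_sum
        intro i _
        have : p i * y i ^ 2 ≤ 1 * y i ^ 2 :=
          mul_le_mul_of_nonneg_right (this i) (sq_nonneg _)
        nlinarith [this]
      have h2 : y ⬝ᵥ y ≤ specNorm Ab ^ 2 * 1 := by
        rw [← hv]; exact mulVec_dot_le Ab v
      nlinarith [sq_nonneg (∑ i, p i * y i)]
  intro i j
  -- eigenvalue bounds
  have eig : ∀ k : Fin D, lam ≤ hH.eigenvalues k ∧
      hH.eigenvalues k ≤ lam + specNorm Ab ^ 2 := by
    intro k
    have hval := hH.eigenvalues_eq k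
    set v : Fin D → ℝ := ⇑(hH.eigenvectorBasis k) with hvdef
    have hnorm : ‖hH.eigenvectorBasis k‖ = 1 := hH.eigenvectorBasis.orthonormal.1 k
    have hv : v ⬝ᵥ v = 1 := by
      have h0 : Real.sqrt (∑ l, ‖hH.eigenvectorBasis k l‖ ^ 2) = 1 := by
        rw [← EuclideanSpace.norm_eq]; exact hnorm
      rw [Real.sqrt_eq_one] at h0
      simpa [dotProduct, sq, Real.norm_eq_abs, abs_mul_abs_self] using h0
    have hval' : hH.eigenvalues k = v ⬝ᵥ (hessE lam Ab p *ᵥ v) := by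
      simpa using hval
    rw [hval']
    exact key v hv
  obtain ⟨hi1, hi2⟩ := eig i
  obtain ⟨hj1, hj2⟩ := eig j
  have hjpos : 0 < hH.eigenvalues j := lt_of_lt_of_le hlam hj1
  have hs : (0:ℝ) ≤ specNorm Ab ^ 2 := sq_nonneg _
  calc hH.eigenvalues i / hH.eigenvalues j ≤ (lam + specNorm Ab ^ 2) / lam := by
        apply div_le_div₀ (by linarith) hi2 hlam hj1
    _ = 1 + specNorm Ab ^ 2 / lam := by field_simp
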